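/- arXiv:2208.10416 — 2 statements merged into one kernel-verified Lean document; each statement's English description precedes it below -/
import Mathlib

section
/- Fix an integer r ≥ 1 and let a₀, a₁, …, a_r : ℤ → ℝ be the univariate B-spline UEP filters. Then for every k ∈ ℤ, Σ_{α=0}^r Σ_{m∈ℤ} a_α[m]·a_α[m+k] equals 1 if k = 0 and equals 0 otherwise. (Equivalently, the Fourier series â_α(ξ) = Σ_k a_α[k]e^{−ikξ} satisfy Σ_{α=0}^r |â_α(ξ)|² = 1 for all ξ ∈ ℝ, the first condition of the unitary extension principle.) -/
noncomputable section

namespace WFrame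

/-- convolution of finitely supported sequences on ℤ -/
def fconv (f g : ℤ →₀ ℝ) : ℤ →₀ ℝ :=
  f.sum fun a c => g.sum fun b d => Finsupp.single (a + b) (c * d)

/-- convolution power; `fpow f 0` is the Dirac delta at 0 -/
def fpow (f : ℤ →₀ ℝ) : ℕ → (ℤ →₀ ℝ)
  | 0 => Finsupp.single 0 1
  | n + 1 => fconv (fpow f n) f

/-- the 1st order average filter p = δ₀ + δ₁ -/
def pF : ℤ →₀ ℝ := Finsupp.single 0 1 + Finsupp.single 1 1

/-- the 1st order difference filter q = δ₀ − δ₁ -/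
def qF : ℤ →₀ ℝ := Finsupp.single 0 1 - Finsupp.single 1 1

/-- j_r = 1 if r odd, 0 if r even -/
def jr (r : ℕ) : ℤ := if r % 2 = 1 then 1 else 0

/-- univariate B-spline UEP filter `a_α`; `aF r α k = a_α[k]`.
`Finsupp.mapDomain (· + jr r)` shifts the sequence: the value of the result at `k` is
the value of the original sequence at `k - jr r`. -/
def aF (r α : ℕ) : ℤ →₀ ℝ :=
  if α = 0 then ((2:ℝ) ^ (-(r:ℤ))) • Finsupp.mapDomain (· + jr r) (fpow pF r)
  else ((-1:ℝ) ^ (α + 1) * (2:ℝ) ^ (-(r:ℤ)) * Real.sqrt (r.choose α)) •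
    Finsupp.mapDomain (· + jr r) (fconv (fpow pF (r - α)) (fpow qF α))

end WFrame

namespace WFrame

abbrev AA := AddMonoidAlgebra ℝ ℤ

/-- identity cast from plain finsupps to the monoid algebra -/
def toA (f : ℤ →₀ ℝ) : AA := AddMonoidAlgebra.ofCoeff f

lemma toA_smul (s : ℝ) (f : ℤ →₀ ℝ) : toA (s • f) = s • toA f := rfl

lemma fconv_eq (f g : ℤ →₀ ℝ) : toA (fconv f g) = toA f * toA g :=
  by simp only [toA, fconv, AddMonoidAlgebra.mul_def, AddMonoidAlgebra.ofCoeff_finsuppSum,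
    AddMonoidAlgebra.ofCoeff_single, AddMonoidAlgebra.coeff_ofCoeff]

lemma fpow_eq (f : ℤ →₀ ℝ) (n : ℕ) : toA (fpow f n) = toA f ^ n := by
  induction n with
  | zero => simp only [fpow, pow_zero]; exact (AddMonoidAlgebra.one_def (R := ℝ) (M := ℤ)).symm
  | succ n ih => rw [fpow, fconv_eq, ih, pow_succ]

def rfl' : AA →+* AA := AddMonoidAlgebra.mapDomainRingHom ℝ (negAddMonoidHom : ℤ →+ ℤ)

lemma rfl'_apply (f : AA) : rfl' f = toA (Finsupp.mapDomain Neg.neg f.coeff) := rfl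

lemma rfl'_single (a : ℤ) (b : ℝ) :
    rfl' (AddMonoidAlgebra.single a b) = AddMonoidAlgebra.single (-a) b :=
  AddMonoidAlgebra.mapDomain_single

lemma corr_eq (f g : ℤ →₀ ℝ) (k : ℤ) :
    ∑ m ∈ f.support, f m * g (m + k) = (rfl' (toA f) * toA g).coeff k := by
  rw [AddMonoidAlgebra.coeff_mul, rfl'_apply]
  rw [show Finsupp.sum (toA (Finsupp.mapDomain Neg.neg (toA f).coeff)).coeff
        (fun a₁ b₁ => Finsupp.sum (toA g).coeff fun a₂ b₂ => if a₁ + a₂ = k then b₁ * b₂ else 0)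
      = Finsupp.sum f fun a b => Finsupp.sum (toA g).coeff fun a₂ b₂ =>
          if -a + a₂ = k then b * b₂ else 0
    from Finsupp.sum_mapDomain_index_inj neg_injective]
  rw [Finsupp.sum]
  refine Finset.sum_congr rfl fun m hm => ?_
  rw [Finsupp.sum]
  show f m * g (m + k) = ∑ b ∈ g.support, if -m + b = k then f m * g b else 0
  have : ∀ b ∈ g.support,
      (if -m + b = k then f m * g b else 0) = (if b = m + k then f m * g b else 0) := by
    intro b _; exact if_congr (by omega) rfl rfl
  rw [Finset.sum_congr rfl this, Finset.sum_ite_eq' g.support (m + k) (fun b => f m * g b)]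
  by_cases h : m + k ∈ g.support
  · simp [h]
  · simp [h, Finsupp.notMem_support_iff.mp h]

lemma shift_eq (j : ℤ) (f : ℤ →₀ ℝ) :
    toA (Finsupp.mapDomain (· + j) f) = toA f * AddMonoidAlgebra.single j 1 := by
  rw [AddMonoidAlgebra.mul_def]
  show toA (Finsupp.mapDomain (· + j) f) = f.sum fun a b =>
    (AddMonoidAlgebra.single j (1:ℝ)).coeff.sum fun m₂ r₂ => AddMonoidAlgebra.single (a + m₂) (b * r₂)
  rw [Finsupp.mapDomain, toA, AddMonoidAlgebra.ofCoeff_finsuppSum]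
  refine Finsupp.sum_congr fun a _ => ?_
  rw [AddMonoidAlgebra.coeff_single, Finsupp.sum_single_index (by simp)]
  simp

lemma rfl'_smul (s : ℝ) (f : AA) : rfl' (s • f) = s • rfl' f := by
  rw [rfl'_apply, rfl'_apply]
  show toA (Finsupp.mapDomain Neg.neg (s • f.coeff)) = s • toA (Finsupp.mapDomain Neg.neg f.coeff)
  rw [Finsupp.mapDomain_smul]
  rfl

lemma corr_shift (j : ℤ) (b : ℤ →₀ ℝ) (s : ℝ) :
    rfl' (toA (s • Finsupp.mapDomain (· + j) b)) * toA (s • Finsupp.mapDomain (· + j) b)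
      = (s * s) • (rfl' (toA b) * toA b) := by
  rw [toA_smul, shift_eq, rfl'_smul, map_mul, rfl'_single, smul_mul_smul_comm]
  congr 1
  calc rfl' (toA b) * AddMonoidAlgebra.single (-j) 1 * (toA b * AddMonoidAlgebra.single j 1)
      = (rfl' (toA b) * toA b) *
        (AddMonoidAlgebra.single (-j) 1 * AddMonoidAlgebra.single j 1) := by ring
    _ = rfl' (toA b) * toA b := by
        rw [AddMonoidAlgebra.single_mul_single, neg_add_cancel, one_mul,
          ← AddMonoidAlgebra.one_def, mul_one]

lemma term_eq (r α : ℕ) :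
    rfl' (toA (aF r α)) * toA (aF r α)
      = ((2:ℝ) ^ (-(r:ℤ)) * (2:ℝ) ^ (-(r:ℤ))) •
        ((r.choose α : ℝ) •
          ((rfl' (toA pF) * toA pF) ^ (r - α) * (rfl' (toA qF) * toA qF) ^ α)) := by
  by_cases h0 : α = 0
  · subst h0
    have ha : aF r 0 = ((2:ℝ) ^ (-(r:ℤ))) • Finsupp.mapDomain (· + jr r) (fpow pF r) := by
      simp [aF]
    rw [ha, corr_shift, fpow_eq, map_pow, mul_pow]
    simp [smul_smul]
  · have ha : aF r α = ((-1:ℝ) ^ (α + 1) * (2:ℝ) ^ (-(r:ℤ)) * Real.sqrt (r.choose α)) •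
        Finsupp.mapDomain (· + jr r) (fconv (fpow pF (r - α)) (fpow qF α)) := by
      simp [aF, h0]
    rw [ha, corr_shift, fconv_eq, fpow_eq, fpow_eq, map_mul, map_pow, map_pow]
    have hb : rfl' (toA pF) ^ (r - α) * rfl' (toA qF) ^ α * (toA pF ^ (r - α) * toA qF ^ α)
        = (rfl' (toA pF) * toA pF) ^ (r - α) * (rfl' (toA qF) * toA qF) ^ α := by
      rw [mul_pow, mul_pow]; ring
    rw [hb, smul_smul]
    congr 1
    have hs : Real.sqrt (r.choose α) * Real.sqrt (r.choose α) = (r.choose α : ℝ) :=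
      Real.mul_self_sqrt (Nat.cast_nonneg _)
    have hm : ((-1:ℝ)) ^ (α + 1) * ((-1:ℝ)) ^ (α + 1) = 1 := by
      rw [← pow_add]
      exact Even.neg_one_pow ⟨α + 1, rfl⟩
    calc ((-1:ℝ)^(α+1) * (2:ℝ)^(-(r:ℤ)) * Real.sqrt (r.choose α)) *
          ((-1:ℝ)^(α+1) * (2:ℝ)^(-(r:ℤ)) * Real.sqrt (r.choose α))
        = ((-1:ℝ)^(α+1) * (-1:ℝ)^(α+1)) * ((2:ℝ)^(-(r:ℤ)) * (2:ℝ)^(-(r:ℤ))) *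
          (Real.sqrt (r.choose α) * Real.sqrt (r.choose α)) := by ring
      _ = (2:ℝ)^(-(r:ℤ)) * (2:ℝ)^(-(r:ℤ)) * (r.choose α : ℝ) := by rw [hs, hm, one_mul]
      _ = _ := by ring

lemma PQ_sum : rfl' (toA qF) * toA qF + rfl' (toA pF) * toA pF
    = AddMonoidAlgebra.single (0:ℤ) (4:ℝ) := by
  have hp : rfl' (toA pF) = AddMonoidAlgebra.single (0:ℤ) (1:ℝ)
      + AddMonoidAlgebra.single (-1) 1 := by
    show rfl' (AddMonoidAlgebra.single (0:ℤ) (1:ℝ) + AddMonoidAlgebra.single 1 1) = _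
    rw [map_add, rfl'_single, rfl'_single, neg_zero]
  have hq : rfl' (toA qF) = AddMonoidAlgebra.single (0:ℤ) (1:ℝ)
      - AddMonoidAlgebra.single (-1) 1 := by
    show rfl' (AddMonoidAlgebra.single (0:ℤ) (1:ℝ) - AddMonoidAlgebra.single 1 1) = _
    rw [map_sub, rfl'_single, rfl'_single, neg_zero]
  have hp' : toA pF = AddMonoidAlgebra.single (0:ℤ) (1:ℝ) + AddMonoidAlgebra.single 1 1 := rfl
  have hq' : toA qF = AddMonoidAlgebra.single (0:ℤ) (1:ℝ) - AddMonoidAlgebra.single 1 1 := rfl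
  rw [hp, hq, hp', hq']
  rw [show (AddMonoidAlgebra.single (0:ℤ) (1:ℝ) - AddMonoidAlgebra.single (-1) 1) *
        (AddMonoidAlgebra.single (0:ℤ) (1:ℝ) - AddMonoidAlgebra.single 1 1) +
      (AddMonoidAlgebra.single (0:ℤ) (1:ℝ) + AddMonoidAlgebra.single (-1) 1) *
        (AddMonoidAlgebra.single (0:ℤ) (1:ℝ) + AddMonoidAlgebra.single 1 1)
      = (AddMonoidAlgebra.single (0:ℤ) (1:ℝ) * AddMonoidAlgebra.single (0:ℤ) (1:ℝ)
          + AddMonoidAlgebra.single (0:ℤ) (1:ℝ) * AddMonoidAlgebra.single (0:ℤ) (1:ℝ))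
        + (AddMonoidAlgebra.single (-1:ℤ) (1:ℝ) * AddMonoidAlgebra.single (1:ℤ) (1:ℝ)
          + AddMonoidAlgebra.single (-1:ℤ) (1:ℝ) * AddMonoidAlgebra.single (1:ℤ) (1:ℝ))
      from by ring]
  simp only [AddMonoidAlgebra.single_mul_single, one_mul, add_zero, neg_add_cancel]
  rw [show (4:ℝ) = (1 + 1) + (1 + 1) from by norm_num]
  rw [show AddMonoidAlgebra.single (0:ℤ) ((1:ℝ) + 1 + (1 + 1))
      = (AddMonoidAlgebra.single (0:ℤ) (1:ℝ) + AddMonoidAlgebra.single (0:ℤ) (1:ℝ))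
        + (AddMonoidAlgebra.single (0:ℤ) (1:ℝ) + AddMonoidAlgebra.single (0:ℤ) (1:ℝ)) from by
    simp only [← AddMonoidAlgebra.single_add]]

lemma key (r : ℕ) :
    (∑ α ∈ Finset.range (r + 1), rfl' (toA (aF r α)) * toA (aF r α)) = (1 : AA) := by
  have hterm : ∀ α ∈ Finset.range (r + 1), rfl' (toA (aF r α)) * toA (aF r α)
      = ((2:ℝ) ^ (-(r:ℤ)) * (2:ℝ) ^ (-(r:ℤ))) •
        ((r.choose α : ℝ) •
          ((rfl' (toA pF) * toA pF) ^ (r - α) * (rfl' (toA qF) * toA qF) ^ α)) :=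
    fun α _ => term_eq r α
  rw [Finset.sum_congr rfl hterm, ← Finset.smul_sum]
  have hb : ∑ α ∈ Finset.range (r + 1),
      (r.choose α : ℝ) • ((rfl' (toA pF) * toA pF) ^ (r - α) * (rfl' (toA qF) * toA qF) ^ α)
      = (rfl' (toA qF) * toA qF + rfl' (toA pF) * toA pF) ^ r := by
    rw [add_pow]
    refine Finset.sum_congr rfl fun α hα => ?_
    rw [Nat.cast_smul_eq_nsmul, nsmul_eq_mul]
    ring
  rw [hb, PQ_sum, AddMonoidAlgebra.single_pow, smul_zero]
  show ((2:ℝ) ^ (-(r:ℤ)) * (2:ℝ) ^ (-(r:ℤ))) • AddMonoidAlgebra.single (0:ℤ) ((4:ℝ)^r) = 1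
  rw [AddMonoidAlgebra.one_def]
  rw [show ((2:ℝ) ^ (-(r:ℤ)) * (2:ℝ) ^ (-(r:ℤ))) • AddMonoidAlgebra.single (0:ℤ) ((4:ℝ)^r)
      = AddMonoidAlgebra.single (0:ℤ) ((2:ℝ) ^ (-(r:ℤ)) * (2:ℝ) ^ (-(r:ℤ)) * (4:ℝ)^r)
      from AddMonoidAlgebra.smul_single' _ _ _]
  congr 1
  have h2 : (2:ℝ) ^ (-(r:ℤ)) = ((2:ℝ) ^ r)⁻¹ := by
    rw [zpow_neg, zpow_natCast]
  rw [h2, show (4:ℝ) = 2 * 2 from by norm_num, mul_pow]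
  have h3 : (2:ℝ) ^ r ≠ 0 := pow_ne_zero _ (by norm_num)
  field_simp

/-- first UEP condition for the univariate B-spline filters:
Σ_{α=0}^r Σ_{m∈ℤ} a_α[m]·a_α[m+k] = δ_{k,0}. -/
theorem stmt15 (r : ℕ) (hr : 1 ≤ r) (k : ℤ) :
    (∑ α ∈ Finset.range (r + 1), ∑ m ∈ (aF r α).support, aF r α m * aF r α (m + k)) =
      if k = 0 then 1 else 0 := by
  have h1 : ∀ α ∈ Finset.range (r + 1),
      (∑ m ∈ (aF r α).support, aF r α m * aF r α (m + k))
        = (rfl' (toA (aF r α)) * toA (aF r α)).coeff k := fun α _ => corr_eq _ _ k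
  rw [Finset.sum_congr rfl h1, ← Finset.sum_apply', ← AddMonoidAlgebra.coeff_sum, key,
    AddMonoidAlgebra.one_def, AddMonoidAlgebra.coeff_single]
  rw [Finsupp.single_apply]
  simp [eq_comm]

end WFrame
end
end

section
/- Fix an integer r ≥ 1 and let a₀, a₁, …, a_r : ℤ → ℝ be the univariate B-spline UEP filters. Then for every k ∈ ℤ, Σ_{α=0}^r Σ_{m∈ℤ} (−1)^m·a_α[m]·a_α[m+k] = 0. (Equivalently, the Fourier series â_α(ξ) = Σ_k a_α[k]e^{−ikξ} satisfy Σ_{α=0}^r â_α(ξ)·conj(â_α(ξ+π)) = 0 for all ξ ∈ ℝ, the second condition of the unitary extension principle.) -/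
noncomputable section

namespace WFrame

open LaurentPolynomial

abbrev LP := LaurentPolynomial ℝ

def L (f : ℤ →₀ ℝ) : LP := AddMonoidAlgebra.ofCoeff f

lemma L_apply (f : ℤ →₀ ℝ) (n : ℤ) : (L f).coeff n = f n := rfl
lemma L_single (n : ℤ) (c : ℝ) : L (Finsupp.single n c) = AddMonoidAlgebra.single n c := rfl
lemma L_zero : L 0 = 0 := rfl
lemma L_add (f g : ℤ →₀ ℝ) : L (f + g) = L f + L g := rfl
lemma L_smul (c : ℝ) (f : ℤ →₀ ℝ) : L (c • f) = c • L f := rfl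
lemma L_fconv (f g : ℤ →₀ ℝ) : L (fconv f g) = L f * L g := by
  rw [AddMonoidAlgebra.mul_def, L, fconv, AddMonoidAlgebra.ofCoeff_finsuppSum]
  simp only [AddMonoidAlgebra.ofCoeff_finsuppSum, AddMonoidAlgebra.ofCoeff_single]
  rfl

lemma L_fpow (f : ℤ →₀ ℝ) (n : ℕ) : L (fpow f n) = L f ^ n := by
  induction n with
  | zero => rw [pow_zero, fpow, L_single, ← AddMonoidAlgebra.one_def]
  | succ n ih => rw [fpow, L_fconv, ih, pow_succ]

lemma L_mapDomain (j : ℤ) (f : ℤ →₀ ℝ) :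
    L (Finsupp.mapDomain (· + j) f) = L f * T j := by
  induction f using Finsupp.induction_linear with
  | zero => rw [Finsupp.mapDomain_zero, L_zero, zero_mul]
  | add f g hf hg =>
      rw [Finsupp.mapDomain_add]
      rw [L_add, hf, hg, L_add, add_mul]
  | single n c =>
      rw [Finsupp.mapDomain_single, L_single, L_single, T]
      rw [AddMonoidAlgebra.single_mul_single, mul_one]

/-- the multiplicative map n ↦ (−1)^n T^(−n) -/
def Nhom : Multiplicative ℤ →* LP where
  toFun z := (-1 : ℝ) ^ (Multiplicative.toAdd z) • T (-(Multiplicative.toAdd z))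
  map_one' := by simp [T_zero]
  map_mul' x y := by
    show (-1:ℝ) ^ (Multiplicative.toAdd x + Multiplicative.toAdd y) •
        T (-(Multiplicative.toAdd x + Multiplicative.toAdd y)) = _
    rw [neg_add, T_add, zpow_add₀ (by norm_num : (-1:ℝ) ≠ 0)]
    rw [smul_mul_smul_comm]

/-- the ring homomorphism `N f [m] = (−1)^m f[−m]` -/
def N : LP →ₐ[ℝ] LP := AddMonoidAlgebra.lift ℝ LP ℤ Nhom

lemma N_single (n : ℤ) (c : ℝ) :
    N (AddMonoidAlgebra.single n c) = c • ((-1 : ℝ) ^ n • T (-n)) := by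
  rw [N, AddMonoidAlgebra.lift_single]; rfl

lemma T_neg_mul_T (n : ℤ) : (T (-n) : LP) * T n = 1 := by
  rw [← T_add, neg_add_cancel, T_zero]

lemma N_P : N (L pF) = -(T (-1)) * L qF := by
  have h := T_neg_mul_T (1 : ℤ)
  rw [pF, L_add, L_single, L_single, map_add, N_single, N_single]
  show (1:ℝ) • ((-1:ℝ)^(0:ℤ) • T (-0)) + (1:ℝ) • ((-1:ℝ)^(1:ℤ) • T (-1)) = _
  rw [qF]
  rw [show L (Finsupp.single 0 1 - Finsupp.single 1 1) = L (Finsupp.single 0 1) - L (Finsupp.single 1 1) from AddMonoidAlgebra.ofCoeff_sub _ _]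
  rw [L_single, L_single]
  have h0 : (AddMonoidAlgebra.single (0:ℤ) (1:ℝ) : LP) = 1 := (AddMonoidAlgebra.one_def).symm
  have h1 : (AddMonoidAlgebra.single (1:ℤ) (1:ℝ) : LP) = T 1 := rfl
  rw [h0, h1]
  simp only [zpow_zero, zpow_one, one_smul, neg_zero, T_zero, neg_smul, one_smul]
  linear_combination -h

lemma N_Q : N (L qF) = T (-1) * L pF := by
  have h := T_neg_mul_T (1 : ℤ)
  rw [qF]
  rw [show L (Finsupp.single 0 1 - Finsupp.single 1 1) = L (Finsupp.single 0 1) - L (Finsupp.single 1 1) from AddMonoidAlgebra.ofCoeff_sub _ _]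
  rw [L_single, L_single, map_sub, N_single, N_single, pF, L_add, L_single, L_single]
  have h0 : (AddMonoidAlgebra.single (0:ℤ) (1:ℝ) : LP) = 1 := (AddMonoidAlgebra.one_def).symm
  have h1 : (AddMonoidAlgebra.single (1:ℤ) (1:ℝ) : LP) = T 1 := rfl
  rw [h0, h1]
  simp only [zpow_zero, zpow_one, one_smul, neg_zero, T_zero, neg_smul, one_smul]
  linear_combination -h

def cc (r α : ℕ) : ℝ :=
  if α = 0 then (2:ℝ) ^ (-(r:ℤ))
  else (-1:ℝ) ^ (α + 1) * (2:ℝ) ^ (-(r:ℤ)) * Real.sqrt (r.choose α)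

lemma aL_eq (r α : ℕ) :
    L (aF r α) = cc r α • (L pF ^ (r - α) * L qF ^ α * T (jr r)) := by
  rcases eq_or_ne α 0 with h | h
  · subst h
    rw [aF, cc, if_pos rfl, if_pos rfl, L_smul, L_mapDomain, L_fpow]
    rw [Nat.sub_zero, pow_zero, mul_one]
  · rw [aF, cc, if_neg h, if_neg h, L_smul, L_mapDomain, L_fconv, L_fpow, L_fpow]

lemma cc_sq (r α : ℕ) : cc r α * cc r α = ((2:ℝ) ^ (-(r:ℤ)))^2 * (r.choose α) := by
  rcases eq_or_ne α 0 with h | h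
  · subst h; rw [cc, if_pos rfl]; simp [sq]
  · rw [cc, if_neg h]
    have hs : Real.sqrt (r.choose α) * Real.sqrt (r.choose α) = (r.choose α : ℝ) :=
      Real.mul_self_sqrt (by positivity)
    have hm : ((-1:ℝ) ^ (α+1)) * ((-1:ℝ) ^ (α+1)) = 1 := by
      rw [← pow_add]; exact Even.neg_one_pow ⟨α+1, rfl⟩
    calc ((-1:ℝ) ^ (α+1) * (2:ℝ) ^ (-(r:ℤ)) * Real.sqrt (r.choose α)) *
          ((-1:ℝ) ^ (α+1) * (2:ℝ) ^ (-(r:ℤ)) * Real.sqrt (r.choose α))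
        = (((-1:ℝ) ^ (α+1)) * ((-1:ℝ) ^ (α+1))) * (((2:ℝ) ^ (-(r:ℤ)))^2 *
            (Real.sqrt (r.choose α) * Real.sqrt (r.choose α))) := by ring
      _ = _ := by rw [hm, hs, one_mul]

lemma smul_eq_C_mul (c : ℝ) (x : LP) : c • x = C c * x := by
  ext n
  show c * x.coeff n = _
  rw [← AddMonoidAlgebra.coeff_single_zero_mul x c n]; rfl

lemma N_Te (e : ℤ) : N (T e) = (-1:ℝ)^e • T (-e) := by
  have : (T e : LP) = AddMonoidAlgebra.single e 1 := rfl
  rw [this, N_single, one_smul]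

lemma hx_eq (r α : ℕ) (hα : α ≤ r) :
    N (L pF ^ (r-α) * L qF ^ α * T (jr r)) * (L pF ^ (r-α) * L qF ^ α * T (jr r))
      = ((-1:ℝ)^(jr r) * (-1:ℝ)^(r-α)) • (T (-(r:ℤ)) * L pF ^ r * L qF ^ r) := by
  have h1 : (T (-1:ℤ) : LP)^(r-α) * T (-1:ℤ)^α = T (-(r:ℤ)) := by
    rw [← pow_add, Nat.sub_add_cancel hα, T_pow]
    congr 1; ring
  have h2 : (T (-(jr r)) : LP) * T (jr r) = 1 := T_neg_mul_T _
  have hP : (L pF)^α * (L pF)^(r-α) = (L pF)^r := by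
    rw [← pow_add, Nat.add_sub_cancel' hα]
  have hQ : (L qF)^(r-α) * (L qF)^α = (L qF)^r := by
    rw [← pow_add, Nat.sub_add_cancel hα]
  have h3 : C ((-1:ℝ)^(r-α)) = (-1:LP)^(r-α) := by
    rw [map_pow, map_neg, map_one]
  rw [map_mul, map_mul, map_pow, map_pow, N_P, N_Q, N_Te]
  rw [smul_eq_C_mul, smul_eq_C_mul, map_mul, h3, ← h1, ← hP, ← hQ]
  rw [neg_mul, neg_pow]
  linear_combination ((-1:LP)^(r-α) * C ((-1:ℝ)^(jr r)) * T (-1:ℤ)^(r-α) * T (-1:ℤ)^α *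
    L qF^(r-α) * L qF^α * L pF^(r-α) * L pF^α) * h2

lemma prod_eq (r α : ℕ) (hα : α ≤ r) :
    N (L (aF r α)) * L (aF r α) =
      (((2:ℝ)^(-(r:ℤ)))^2 * (r.choose α) * ((-1:ℝ)^(jr r) * (-1:ℝ)^(r-α))) •
        (T (-(r:ℤ)) * L pF ^ r * L qF ^ r) := by
  rw [aL_eq, map_smul, smul_mul_smul_comm, cc_sq, hx_eq r α hα, smul_smul]

lemma coeff_eq (f : ℤ →₀ ℝ) (k : ℤ) :
    ∑ m ∈ f.support, (-1:ℝ)^m * f m * f (m+k) = (N (L f) * L f).coeff k := by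
  rw [N, AddMonoidAlgebra.lift_apply, Finsupp.sum, Finset.sum_mul, AddMonoidAlgebra.coeff_sum, Finset.sum_apply']
  refine Finset.sum_congr rfl fun n _ => ?_
  have h : ((L f).coeff n • Nhom (Multiplicative.ofAdd n)) =
      AddMonoidAlgebra.single (-n) (f n * (-1:ℝ)^n) := by
    show f n • ((-1:ℝ)^n • T (-n)) = _
    rw [smul_smul]
    rw [T, AddMonoidAlgebra.smul_single, smul_eq_mul, mul_one]
  rw [h, AddMonoidAlgebra.coeff_single_mul_apply, neg_neg, L_apply]
  ring

lemma alt_sum (r : ℕ) (hr : 1 ≤ r) :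
    ∑ α ∈ Finset.range (r+1), (-1:ℝ)^(r-α) * (r.choose α) = 0 := by
  have hint := Int.alternating_sum_range_choose (n := r)
  rw [if_neg (by omega : r ≠ 0)] at hint
  have hz : ∑ α ∈ Finset.range (r+1), (-1:ℝ)^α * (r.choose α) = 0 := by
    have : ∑ α ∈ Finset.range (r+1), (-1:ℝ)^α * (r.choose α) =
        ((∑ α ∈ Finset.range (r+1), (-1:ℤ)^α * (r.choose α) : ℤ) : ℝ) := by
      push_cast; rfl
    rw [this, hint, Int.cast_zero]
  calc ∑ α ∈ Finset.range (r+1), (-1:ℝ)^(r-α) * (r.choose α)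
      = ∑ α ∈ Finset.range (r+1), (-1:ℝ)^r * ((-1:ℝ)^α * (r.choose α)) := by
        refine Finset.sum_congr rfl fun α hα => ?_
        have hle : α ≤ r := by
          have := Finset.mem_range.1 hα; omega
        have h : (-1:ℝ)^(r-α) * (-1:ℝ)^α = (-1:ℝ)^r := by
          rw [← pow_add, Nat.sub_add_cancel hle]
        have h2 : ((-1:ℝ)^α) * ((-1:ℝ)^α) = 1 := by
          rw [← pow_add]; exact Even.neg_one_pow ⟨α, rfl⟩
        linear_combination ((r.choose α : ℝ) * (-1:ℝ)^α) * h -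
          ((r.choose α : ℝ) * (-1:ℝ)^(r-α)) * h2
    _ = (-1:ℝ)^r * ∑ α ∈ Finset.range (r+1), (-1:ℝ)^α * (r.choose α) := by
        rw [Finset.mul_sum]
    _ = 0 := by rw [hz, mul_zero]

lemma total_zero (r : ℕ) (hr : 1 ≤ r) :
    ∑ α ∈ Finset.range (r+1), N (L (aF r α)) * L (aF r α) = 0 := by
  rw [Finset.sum_congr rfl (fun α hα => prod_eq r α (by
    have := Finset.mem_range.1 hα; omega))]
  rw [← Finset.sum_smul]
  have : ∑ α ∈ Finset.range (r+1),
      (((2:ℝ)^(-(r:ℤ)))^2 * (r.choose α) * ((-1:ℝ)^(jr r) * (-1:ℝ)^(r-α))) = 0 := by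
    have h1 : ∀ α ∈ Finset.range (r+1),
        (((2:ℝ)^(-(r:ℤ)))^2 * (r.choose α) * ((-1:ℝ)^(jr r) * (-1:ℝ)^(r-α)))
          = (((2:ℝ)^(-(r:ℤ)))^2 * (-1:ℝ)^(jr r)) * ((-1:ℝ)^(r-α) * (r.choose α)) :=
      fun α _ => by ring
    rw [Finset.sum_congr rfl h1, ← Finset.mul_sum, alt_sum r hr, mul_zero]
  rw [this, zero_smul]

end WFrame

namespace WFrame

open LaurentPolynomial

/-- second UEP condition for the univariate B-spline filters:
Σ_{α=0}^r Σ_{m∈ℤ} (−1)^m·a_α[m]·a_α[m+k] = 0. -/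
theorem stmt16 (r : ℕ) (hr : 1 ≤ r) (k : ℤ) :
    (∑ α ∈ Finset.range (r + 1),
        ∑ m ∈ (aF r α).support, (-1 : ℝ) ^ m * aF r α m * aF r α (m + k)) = 0 := by
  calc ∑ α ∈ Finset.range (r + 1),
        ∑ m ∈ (aF r α).support, (-1 : ℝ) ^ m * aF r α m * aF r α (m + k)
      = ∑ α ∈ Finset.range (r + 1), (N (L (aF r α)) * L (aF r α)).coeff k :=
        Finset.sum_congr rfl fun α _ => coeff_eq (aF r α) k
    _ = (∑ α ∈ Finset.range (r + 1), N (L (aF r α)) * L (aF r α) : LP).coeff k := by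
        rw [AddMonoidAlgebra.coeff_sum, Finset.sum_apply']
    _ = (0 : LP).coeff k := by rw [total_zero r hr]
    _ = 0 := rfl

end WFrame
end
end
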